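/- arXiv:1610.02059 — 6 statements merged into one kernel-verified Lean document; each statement's English description precedes it below -/
import Mathlib

section
/- Let F be a free group, p a prime, and A an F-module. If δ : F → A is a derivation, then for every x ∈ F, δ(x^p) lies in the subgroup generated by p·δ(F) together with [δ(F), F, ..., F] (with F appearing p−1 times), where [m, g] := m·g − m denotes the module commutator. -/
/-- The "module commutator": for a subgroup `S` of the `G`-module `A`, the subgroup
generated by all `m·g − m` with `m ∈ S`, `g ∈ G`. -/
def modComm {G A : Type*} [AddCommGroup A] (act : A → G → A) (S : AddSubgroup A) :
    AddSubgroup A :=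
  AddSubgroup.closure {x | ∃ m ∈ S, ∃ g : G, x = act m g - m}

/-- Iterated module commutator `[D, ᵢ G]`, starting from `D` at `i = 0`. -/
def iterComm {G A : Type*} [AddCommGroup A] (act : A → G → A) (D : AddSubgroup A) :
    ℕ → AddSubgroup A
  | 0 => D
  | n + 1 => modComm act (iterComm act D n)

/-- For a derivation `δ` from a free group `F` to an `F`-module `A` and a prime `p`,
`δ (x ^ p)` lies in the subgroup generated by `p • δ(F)` together with
`[δ(F), _{p-1} F]`. -/
theorem stmt2 {α A : Type*} [AddCommGroup A] (p : ℕ) (hp : p.Prime)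
    (act : A → FreeGroup α → A)
    (act_add : ∀ m n g, act (m + n) g = act m g + act n g)
    (act_one : ∀ m, act m 1 = m)
    (act_mul : ∀ m g h, act m (g * h) = act (act m g) h)
    (δ : FreeGroup α → A)
    (hδ : ∀ g h, δ (g * h) = act (δ g) h + δ h) :
    ∀ x : FreeGroup α,
      δ (x ^ p) ∈
        AddSubgroup.closure ((fun m => p • m) '' Set.range δ) ⊔
          iterComm act (AddSubgroup.closure (Set.range δ)) (p - 1) := by
  intro x
  set D : AddSubgroup A := AddSubgroup.closure (Set.range δ) with hD
  set P : AddSubgroup A := AddSubgroup.closure ((fun m => p • m) '' Set.range δ) with hP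
  -- δ 1 = 0
  have δ_one : δ 1 = 0 := by
    have h := hδ 1 1
    rw [mul_one, act_one] at h
    exact (right_eq_add.mp h)
  -- the operator U m = act m x - m, as an additive hom
  set U : A →+ A := AddMonoidHom.mk' (fun m => act m x - m)
    (fun a b => by simp only [act_add a b x]; abel) with hU
  have U_apply : ∀ m, U m = act m x - m := fun m => rfl
  -- D is stable under act
  have mem_D : ∀ y, δ y ∈ D := fun y => AddSubgroup.subset_closure ⟨y, rfl⟩
  have act_zero : ∀ g, act 0 g = 0 := by
    intro g
    have h := act_add 0 0 g
    rw [add_zero] at h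
    exact (left_eq_add.mp h)
  have act_neg : ∀ m g, act (-m) g = -(act m g) := by
    intro m g
    have h := act_add m (-m) g
    rw [add_neg_cancel, act_zero] at h
    exact (neg_eq_of_add_eq_zero_right h.symm).symm
  have D_act : ∀ m ∈ D, ∀ g, act m g ∈ D := by
    intro m hm
    induction hm using AddSubgroup.closure_induction with
    | mem y hy =>
      intro g
      obtain ⟨z, rfl⟩ := hy
      have h := hδ z g
      have : act (δ z) g = δ (z * g) - δ g := by rw [h]; abel
      rw [this]
      exact D.sub_mem (mem_D _) (mem_D _)
    | zero => intro g; rw [act_zero]; exact D.zero_mem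
    | add a b _ _ ha hb => intro g; rw [act_add]; exact D.add_mem (ha g) (hb g)
    | neg a _ ha => intro g; rw [act_neg]; exact D.neg_mem (ha g)
  have D_U : ∀ m ∈ D, U m ∈ D := fun m hm => D.sub_mem (D_act m hm x) hm
  have u_mem_D : ∀ j, U^[j] (δ x) ∈ D := by
    intro j
    induction j with
    | zero => exact mem_D x
    | succ j ih => rw [Function.iterate_succ_apply']; exact D_U _ ih
  have u_mem_iter : ∀ j, U^[j] (δ x) ∈ iterComm act D j := by
    intro j
    induction j with
    | zero => exact mem_D x
    | succ j ih =>
      rw [Function.iterate_succ_apply']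
      exact AddSubgroup.subset_closure ⟨U^[j] (δ x), ih, x, rfl⟩
  -- p-multiples of D lie in P
  have pD : ∀ m ∈ D, p • m ∈ P := by
    intro m hm
    induction hm using AddSubgroup.closure_induction with
    | mem y hy => exact AddSubgroup.subset_closure ⟨y, hy, rfl⟩
    | zero => rw [smul_zero]; exact P.zero_mem
    | add a b _ _ ha hb => rw [smul_add]; exact P.add_mem ha hb
    | neg a _ ha => rw [smul_neg]; exact P.neg_mem ha
  -- main identity
  have key : ∀ n : ℕ,
      δ (x ^ n) = ∑ j ∈ Finset.range n, (n.choose (j + 1)) • U^[j] (δ x) := by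
    intro n
    induction n with
    | zero => simpa using δ_one
    | succ n ih =>
      have step : δ (x ^ (n + 1)) = U (δ (x ^ n)) + δ (x ^ n) + δ x := by
        rw [pow_succ, hδ, U_apply]; abel
      rw [step, ih, map_sum]
      have hUterm : ∀ j, U ((n.choose (j + 1)) • U^[j] (δ x))
          = (n.choose (j + 1)) • U^[j + 1] (δ x) := by
        intro j
        rw [map_nsmul, Function.iterate_succ_apply']
      simp only [hUterm]
      have rhs : ∑ j ∈ Finset.range (n + 1), ((n + 1).choose (j + 1)) • U^[j] (δ x)
          = (∑ j ∈ Finset.range (n + 1), (n.choose j) • U^[j] (δ x))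
            + ∑ j ∈ Finset.range (n + 1), (n.choose (j + 1)) • U^[j] (δ x) := by
        rw [← Finset.sum_add_distrib]
        refine Finset.sum_congr rfl fun j _ => ?_
        rw [Nat.choose_succ_succ, add_smul]
      rw [rhs]
      have first : ∑ j ∈ Finset.range (n + 1), (n.choose j) • U^[j] (δ x)
          = (∑ j ∈ Finset.range n, (n.choose (j + 1)) • U^[j + 1] (δ x)) + δ x := by
        rw [Finset.sum_range_succ']
        simp
      have second : ∑ j ∈ Finset.range (n + 1), (n.choose (j + 1)) • U^[j] (δ x)
          = ∑ j ∈ Finset.range n, (n.choose (j + 1)) • U^[j] (δ x) := by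
        rw [Finset.sum_range_succ, Nat.choose_succ_self, zero_smul, add_zero]
      rw [first, second]
      abel
  -- conclude
  have hp1 : p - 1 + 1 = p := Nat.succ_pred_eq_of_pos hp.pos
  rw [key p, ← hp1, Finset.sum_range_succ, hp1, Nat.choose_self, one_smul]
  refine AddSubgroup.add_mem _ ?_ ?_
  · refine AddSubgroup.sum_mem _ fun j hj => ?_
    have hjlt : j + 1 < p := by
      have := Finset.mem_range.mp hj
      omega
    obtain ⟨k, hk⟩ := hp.dvd_choose_self (Nat.succ_ne_zero j) hjlt
    rw [hk, mul_comm, mul_smul]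
    exact AddSubgroup.nsmul_mem _ (le_sup_left (α := AddSubgroup A)
      (a := P) (b := iterComm act D (p - 1)) (pD _ (u_mem_D j))) k
  · exact le_sup_right (α := AddSubgroup A) (a := P) (b := iterComm act D (p - 1))
      (u_mem_iter (p - 1))
end

section
/- Let G be a group, A a G-module with trivial action of the i-fold commutator, i.e. [A,ᵢG] = 0, and let δ : G → A be a derivation. Then δ(γᵢ(G)) is contained in the subgroup [δ(G),ᵢ₋₁G], where γᵢ(G) denotes the i-th term of the lower central series of G. -/
namespace StmtAux

variable {G A : Type*} [Group G] [AddCommGroup A] {act : A → G → A}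

/-- `S` is invariant under the action. -/
def Inv (act : A → G → A) (S : AddSubgroup A) : Prop := ∀ m ∈ S, ∀ g : G, act m g ∈ S

theorem act_zero (hadd : ∀ m n g, act (m + n) g = act m g + act n g) (g : G) :
    act 0 g = 0 := by
  have := hadd 0 0 g
  simpa using this.symm

theorem act_sub (hadd : ∀ m n g, act (m + n) g = act m g + act n g) (m n : A) (g : G) :
    act (m - n) g = act m g - act n g := by
  have h : act (m - n) g + act n g = act m g := by
    rw [← hadd]; simp
  exact eq_sub_of_add_eq h

theorem act_neg (hadd : ∀ m n g, act (m + n) g = act m g + act n g) (m : A) (g : G) :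
    act (-m) g = - act m g := by
  have h : act (-m) g + act m g = 0 := by
    rw [← hadd]; simpa using act_zero hadd g
  exact eq_neg_of_add_eq_zero_left h

theorem mem_modComm {S : AddSubgroup A} {m : A} (hm : m ∈ S) (g : G) :
    act m g - m ∈ modComm act S :=
  AddSubgroup.subset_closure ⟨m, hm, g, rfl⟩

theorem inv_modComm (hadd : ∀ m n g, act (m + n) g = act m g + act n g)
    (hmul : ∀ m (g h : G), act m (g * h) = act (act m g) h)
    (S : AddSubgroup A) : Inv act (modComm act S) := by
  intro m hm g
  induction hm using AddSubgroup.closure_induction with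
  | mem x hx =>
      obtain ⟨m, hm, g', rfl⟩ := hx
      have : act (act m g' - m) g = (act m (g' * g) - m) - (act m g - m) := by
        rw [act_sub hadd, hmul]; abel
      rw [this]
      exact sub_mem (mem_modComm hm _) (mem_modComm hm _)
  | zero => simpa [act_zero hadd] using (modComm act S).zero_mem
  | add x y _ _ hx hy => rw [hadd]; exact add_mem hx hy
  | neg x _ hx => rw [act_neg hadd]; exact neg_mem hx

theorem modComm_mono {S T : AddSubgroup A} (h : S ≤ T) : modComm act S ≤ modComm act T := by
  apply AddSubgroup.closure_mono
  rintro x ⟨m, hm, g, rfl⟩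
  exact ⟨m, h hm, g, rfl⟩

theorem modComm_le_self {S : AddSubgroup A} (hS : Inv act S) : modComm act S ≤ S := by
  rw [modComm, AddSubgroup.closure_le]
  rintro x ⟨m, hm, g, rfl⟩
  exact sub_mem (hS m hm g) hm

theorem iterComm_shift (S : AddSubgroup A) (n : ℕ) :
    iterComm act (modComm act S) n = iterComm act S (n + 1) := by
  induction n with
  | zero => rfl
  | succ n ih => show modComm act _ = modComm act _; rw [ih]

theorem iterComm_mono {S T : AddSubgroup A} (h : S ≤ T) (n : ℕ) :
    iterComm act S n ≤ iterComm act T n := by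
  induction n with
  | zero => exact h
  | succ n ih => exact modComm_mono ih

theorem inv_iterComm (hadd : ∀ m n g, act (m + n) g = act m g + act n g)
    (hmul : ∀ m (g h : G), act m (g * h) = act (act m g) h)
    {S : AddSubgroup A} (hS : Inv act S) (n : ℕ) :
    Inv act (iterComm act S n) := by
  cases n with
  | zero => exact hS
  | succ n => exact inv_modComm hadd hmul _

end StmtAux

namespace StmtAux
variable {G A : Type*} [Group G] [AddCommGroup A] {act : A → G → A}

theorem key_identity (hadd : ∀ m n g, act (m + n) g = act m g + act n g)
    (hone : ∀ m, act m 1 = m)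
    (hmul : ∀ m (g h : G), act m (g * h) = act (act m g) h)
    (w : A) (x g : G) :
    act w (x * g * x⁻¹ * g⁻¹) - w =
      (act (act w x - w) (g * x⁻¹ * g⁻¹) - (act w x - w))
      - (act (act (act w (g * x⁻¹)) x - act w (g * x⁻¹)) g⁻¹
          - (act (act w (g * x⁻¹)) x - act w (g * x⁻¹)))
      + (act (w - act w (g * x⁻¹)) x - (w - act w (g * x⁻¹))) := by
  have h1 : act (act w x) (g * x⁻¹ * g⁻¹) = act w (x * g * x⁻¹ * g⁻¹) := by
    rw [← hmul, show x * (g * x⁻¹ * g⁻¹) = x * g * x⁻¹ * g⁻¹ from by group]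
  have h2 : act (act (act w (g * x⁻¹)) x) g⁻¹ = w := by
    rw [← hmul, ← hmul, show g * x⁻¹ * (x * g⁻¹) = (1 : G) from by group, hone]
  have h3 : act (act w (g * x⁻¹)) g⁻¹ = act w (g * x⁻¹ * g⁻¹) := by
    rw [← hmul]
  have h4 : act (act w (g * x⁻¹)) x = act w g := by
    rw [← hmul, show g * x⁻¹ * x = g from by group]
  have h5 : act (act w g) g⁻¹ = w := by
    rw [← hmul, show g * g⁻¹ = (1:G) from by group, hone]
  simp only [act_sub hadd, h1, h2, h3, h4, h5]
  abel

/-- Subgroup of `x : G` such that `act w x - w ∈ T` for all `w ∈ S`. -/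
def grp1 (hone : ∀ m, act m 1 = m)
    (hmul : ∀ m (g h : G), act m (g * h) = act (act m g) h)
    (S T : AddSubgroup A) (hS : Inv act S) : Subgroup G where
  carrier := {x | ∀ w ∈ S, act w x - w ∈ T}
  mul_mem' {a b} ha hb := by
    intro w hw
    have h1 := hb (act w a) (hS w hw a)
    have h2 := ha w hw
    have e : act w (a * b) - w = (act (act w a) b - act w a) + (act w a - w) := by
      rw [hmul]; abel
    rw [e]; exact add_mem h1 h2
  one_mem' := by
    intro w hw
    simpa [hone] using T.zero_mem
  inv_mem' {a} ha := by
    intro w hw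
    have h1 := ha (act w a⁻¹) (hS w hw a⁻¹)
    have e : act w a⁻¹ - w = -(act (act w a⁻¹) a - act w a⁻¹) := by
      rw [← hmul, show a⁻¹ * a = (1:G) from by group, hone]; abel
    rw [e]; exact neg_mem h1

theorem R_gen (hadd : ∀ m n g, act (m + n) g = act m g + act n g)
    (hone : ∀ m, act m 1 = m)
    (hmul : ∀ m (g h : G), act m (g * h) = act (act m g) h) :
    ∀ (k : ℕ) (S : AddSubgroup A), Inv act S → ∀ x ∈ (⊤ : Subgroup G).lowerCentralSeries k, ∀ w ∈ S,
      act w x - w ∈ iterComm act S (k + 1) := by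
  intro k
  induction k with
  | zero => intro S hS x _ w hw; exact mem_modComm hw x
  | succ k ih =>
    intro S hS x hx w hw
    have hle : (⊤ : Subgroup G).lowerCentralSeries (k + 1) ≤
        grp1 hone hmul S (iterComm act S (k + 2)) hS := by
      rw [Subgroup.lowerCentralSeries_succ, Subgroup.commutator_def, Subgroup.closure_le]
      rintro y ⟨p, hp, q, -, rfl⟩
      intro w hw
      rw [commutatorElement_def, key_identity hadd hone hmul w p q]
      have hP : act w p - w ∈ iterComm act S (k + 1) := ih S hS p hp w hw
      have hn' : act w (q * p⁻¹) ∈ S := hS w hw _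
      have hQ : act (act w (q * p⁻¹)) p - act w (q * p⁻¹) ∈ iterComm act S (k + 1) :=
        ih S hS p hp _ hn'
      have hv : w - act w (q * p⁻¹) ∈ modComm act S := by
        have h := neg_mem (mem_modComm (act := act) hw (q * p⁻¹))
        rwa [neg_sub] at h
      have h3 : act (w - act w (q * p⁻¹)) p - (w - act w (q * p⁻¹)) ∈
          iterComm act S (k + 2) := by
        have h := ih (modComm act S) (inv_modComm hadd hmul S) p hp _ hv
        rwa [iterComm_shift] at h
      exact add_mem (sub_mem (mem_modComm hP _) (mem_modComm hQ _)) h3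
    exact hle hx w hw

end StmtAux

namespace StmtAux
variable {G A : Type*} [Group G] [AddCommGroup A] {act : A → G → A} {δ : G → A}

theorem der_one (hone : ∀ m, act m 1 = m)
    (hδ : ∀ g h, δ (g * h) = act (δ g) h + δ h) : δ 1 = 0 := by
  have := hδ 1 1
  rw [mul_one, hone] at this
  exact (left_eq_add.mp this)

theorem der_inv (hone : ∀ m, act m 1 = m)
    (hδ : ∀ g h, δ (g * h) = act (δ g) h + δ h) (g : G) :
    δ g⁻¹ = -act (δ g) g⁻¹ := by
  have := hδ g g⁻¹
  rw [mul_inv_cancel, der_one hone hδ] at this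
  exact eq_neg_of_add_eq_zero_right this.symm

theorem der_comm (hadd : ∀ m n g, act (m + n) g = act m g + act n g)
    (hone : ∀ m, act m 1 = m)
    (hδ : ∀ g h, δ (g * h) = act (δ g) h + δ h) (x g : G) :
    δ (x * g * x⁻¹ * g⁻¹) =
      act (act (act (δ x) g - δ x) x⁻¹) g⁻¹ + act (act (δ g) x⁻¹ - δ g) g⁻¹ := by
  rw [hδ (x * g * x⁻¹) g⁻¹, hδ (x * g) x⁻¹, hδ x g, der_inv hone hδ x, der_inv hone hδ g]
  simp only [hadd, act_sub hadd, act_neg hadd]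
  abel

/-- Subgroup of `x : G` with `δ x ∈ T`. -/
def grp2 (hone : ∀ m, act m 1 = m)
    (hδ : ∀ g h, δ (g * h) = act (δ g) h + δ h)
    (T : AddSubgroup A) (hT : Inv act T) : Subgroup G where
  carrier := {x | δ x ∈ T}
  mul_mem' {a b} ha hb := by
    show δ (a * b) ∈ T
    rw [hδ a b]
    exact add_mem (hT _ ha b) hb
  one_mem' := by
    show δ 1 ∈ T
    rw [der_one hone hδ]
    exact T.zero_mem
  inv_mem' {a} ha := by
    show δ a⁻¹ ∈ T
    rw [der_inv hone hδ a]
    exact neg_mem (hT _ ha _)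

end StmtAux

open StmtAux in
/-- If `[A, ᵢ G] = 0` then a derivation `δ : G → A` satisfies
`δ(γᵢ(G)) ⊆ [δ(G), ᵢ₋₁ G]`.  (Here `γᵢ(G) = lowerCentralSeries G (i-1)`.) -/
theorem stmt3 {G A : Type*} [Group G] [AddCommGroup A]
    (act : A → G → A)
    (act_add : ∀ m n g, act (m + n) g = act m g + act n g)
    (act_one : ∀ m, act m 1 = m)
    (act_mul : ∀ m g h, act m (g * h) = act (act m g) h)
    (δ : G → A)
    (hδ : ∀ g h, δ (g * h) = act (δ g) h + δ h)
    (i : ℕ) (hi : 1 ≤ i)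
    (htriv : iterComm act (⊤ : AddSubgroup A) i = ⊥) :
    ∀ x ∈ (⊤ : Subgroup G).lowerCentralSeries (i - 1),
      δ x ∈ iterComm act (AddSubgroup.closure (Set.range δ)) (i - 1) := by
  set D := AddSubgroup.closure (Set.range δ) with hDdef
  have hD : ∀ g, δ g ∈ D := fun g => AddSubgroup.subset_closure ⟨g, rfl⟩
  set E := D ⊔ modComm act D with hEdef
  have hInvMod : ∀ S : AddSubgroup A, Inv act (modComm act S) :=
    inv_modComm act_add act_mul
  have hE : Inv act E := by
    intro w hw g
    rcases AddSubgroup.mem_sup.mp hw with ⟨d, hd, n, hn, rfl⟩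
    rw [act_add]
    refine add_mem ?_ (AddSubgroup.mem_sup_right (hInvMod D n hn g))
    have e : act d g = d + (act d g - d) := by abel
    rw [e]
    exact add_mem (AddSubgroup.mem_sup_left hd) (AddSubgroup.mem_sup_right (mem_modComm hd g))
  have hmodE : modComm act E ≤ modComm act D := by
    rw [modComm, AddSubgroup.closure_le]
    rintro z ⟨m, hm, g, rfl⟩
    rcases AddSubgroup.mem_sup.mp hm with ⟨d, hd, n, hn, rfl⟩
    have e : act (d + n) g - (d + n) = (act d g - d) + (act n g - n) := by
      rw [act_add]; abel
    rw [e]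
    exact add_mem (mem_modComm hd g) (sub_mem (hInvMod D n hn g) hn)
  have hQ : ∀ k, ∀ x ∈ (⊤ : Subgroup G).lowerCentralSeries k, ∀ w ∈ D,
      act w x - w ∈ iterComm act D (k + 1) := by
    intro k x hx w hw
    have h := R_gen act_add act_one act_mul k E hE x hx w (AddSubgroup.mem_sup_left hw)
    have hle : iterComm act E (k + 1) ≤ iterComm act D (k + 1) := by
      calc iterComm act E (k + 1) = iterComm act (modComm act E) k :=
            (iterComm_shift E k).symm
        _ ≤ iterComm act (modComm act D) k := iterComm_mono hmodE k
        _ = iterComm act D (k + 1) := iterComm_shift D k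
    exact hle h
  have hC : ∀ k, ∀ x ∈ (⊤ : Subgroup G).lowerCentralSeries k, δ x ∈ iterComm act D k := by
    intro k
    induction k with
    | zero => intro x _; exact hD x
    | succ k ih =>
      intro x hx
      have hTinv : Inv act (iterComm act D (k + 1)) := hInvMod _
      have hle : (⊤ : Subgroup G).lowerCentralSeries (k + 1) ≤
          grp2 act_one hδ (iterComm act D (k + 1)) hTinv := by
        rw [Subgroup.lowerCentralSeries_succ, Subgroup.commutator_def, Subgroup.closure_le]
        rintro y ⟨p, hp, q, -, rfl⟩
        show δ (p * q * p⁻¹ * q⁻¹) ∈ iterComm act D (k + 1)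
        rw [der_comm act_add act_one hδ p q]
        have h1 : act (δ p) q - δ p ∈ iterComm act D (k + 1) := mem_modComm (ih p hp) q
        have h2 : act (δ q) p⁻¹ - δ q ∈ iterComm act D (k + 1) :=
          hQ k p⁻¹ (inv_mem hp) (δ q) (hD q)
        exact add_mem (hTinv _ (hTinv _ h1 p⁻¹) q⁻¹) (hTinv _ h2 q⁻¹)
      exact hle hx
  intro x hx
  exact hC (i - 1) x hx
end

section
/- Let G be a finite group and M a normal abelian subgroup of G, viewed as a G-module via conjugation. If δ : G → M is a derivation (i.e. δ(gh) = (δ(g))^h · δ(h)) with δ(M) = 1, then the map φ : G → G defined by φ(g) = g·δ(g) is an automorphism of G. -/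
/-- Let `G` be a finite group, `M` a normal abelian subgroup viewed as a `G`-module
by conjugation, and `δ : G → M` a derivation with `δ(M) = 1`.  Then
`φ(g) = g · δ(g)` defines an automorphism of `G`. -/
theorem stmt5 {G : Type*} [Group G] [Finite G] (M : Subgroup G) (hMn : M.Normal)
    (hab : ∀ x ∈ M, ∀ y ∈ M, x * y = y * x)
    (δ : G → M)
    (hδ : ∀ g h : G, (δ (g * h) : G) = h⁻¹ * (δ g : G) * h * (δ h : G))
    (htriv : ∀ m ∈ M, δ m = 1) :
    ∃ φ : G ≃* G, ∀ g : G, φ g = g * (δ g : G) := by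
  have h1 : δ 1 = 1 := htriv 1 M.one_mem
  let f : G →* G :=
    { toFun := fun g => g * (δ g : G)
      map_one' := by simp [h1]
      map_mul' := fun g h => by
        simp only [hδ g h]
        group }
  have hinj : Function.Injective f := by
    rw [injective_iff_map_eq_one]
    intro g hg
    have hg' : g = ((δ g : G))⁻¹ := by
      exact eq_inv_of_mul_eq_one_left (show g * (δ g : G) = 1 from hg)
    have hgM : g ∈ M := hg' ▸ M.inv_mem (δ g).2
    have := htriv g hgM
    rw [hg', this]
    simp
  have hbij : Function.Bijective f := Finite.injective_iff_bijective.mp hinj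
  exact ⟨MulEquiv.ofBijective f hbij, fun g => rfl⟩
end

section
/- Let G be a finite group, M a normal abelian subgroup of G of exponent p contained in the second center Z₂(G), and δ : G → M a derivation (with G acting by conjugation) such that δ(M) = 1 and δ vanishes on the commutator subgroup [G,G]. Then the automorphism φ(g) = g·δ(g) satisfies φ^p = id. -/
/-- Let `G` be a finite group, `M ⊴ G` abelian of exponent `p` with `M ≤ Z₂(G)`,
and `δ : G → M` a derivation (conjugation action) with `δ(M) = 1` and `δ` trivial
on `[G,G]`.  Then the automorphism `φ(g) = g·δ(g)` satisfies `φ^p = id`. -/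
theorem stmt6 {G : Type*} [Group G] [Finite G] (p : ℕ) (hp : p.Prime)
    (M : Subgroup G) (hMn : M.Normal)
    (hab : ∀ x ∈ M, ∀ y ∈ M, x * y = y * x)
    (hexp : ∀ m ∈ M, m ^ p = 1)
    (hM2 : M ≤ upperCentralSeries G 2)
    (δ : G → M)
    (hδ : ∀ g h : G, (δ (g * h) : G) = h⁻¹ * (δ g : G) * h * (δ h : G))
    (htrivM : ∀ m ∈ M, δ m = 1)
    (htrivC : ∀ x ∈ commutator G, δ x = 1) :
    ∀ g : G, (fun g : G => g * (δ g : G))^[p] g = g := by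
  intro g
  have key : ∀ n : ℕ, (fun g : G => g * (δ g : G))^[n] g = g * (δ g : G) ^ n := by
    intro n
    induction n with
    | zero => simp
    | succ n ih =>
      rw [Function.iterate_succ_apply', ih]
      have hmem : (δ g : G) ^ n ∈ M := pow_mem (δ g).2 n
      have h1 : (δ (g * (δ g : G) ^ n) : G) = (δ g : G) := by
        rw [hδ]
        rw [htrivM _ hmem]
        have hc := hab (δ g : G) (δ g).2 ((δ g : G) ^ n) hmem
        push_cast
        rw [mul_one]
        rw [mul_assoc, hc, ← mul_assoc, inv_mul_cancel, one_mul]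
      rw [h1, mul_assoc, ← pow_succ]
  rw [key p, hexp _ (δ g).2, mul_one]
end

section
/- Let p be a prime and G a finite p-group. The following are equivalent: (1) for every i, γᵢ(G) is the unique normal subgroup of G of its order; (2) for every normal subgroup N of G and every i with 1 ≤ i ≤ c(G), either N ≤ γᵢ(G) or γᵢ(G) ≤ N. -/
open Subgroup

private theorem myNormalOfLeCenter {G : Type*} [Group G] {K : Subgroup G}
    (h : K ≤ Subgroup.center G) : K.Normal := by
  refine ⟨fun n hn g => ?_⟩
  have hc := (Subgroup.mem_center_iff.mp (h hn)) g
  have : g * n * g⁻¹ = n := by rw [hc]; group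
  rwa [this]

private theorem myCardComapMk {G : Type*} [Group G] [Finite G] (N : Subgroup G) [N.Normal]
    (K : Subgroup (G ⧸ N)) :
    Nat.card (K.comap (QuotientGroup.mk' N)) = Nat.card K * Nat.card N := by
  have h1 : (K.comap (QuotientGroup.mk' N)).index = K.index :=
    K.index_comap_of_surjective (QuotientGroup.mk'_surjective N)
  have h2 := Subgroup.card_mul_index (K.comap (QuotientGroup.mk' N))
  have h3 := Subgroup.card_mul_index K
  have h4 : Nat.card G = Nat.card (G ⧸ N) * Nat.card N :=
    Subgroup.card_eq_card_quotient_mul_card_subgroup N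
  have hidx : K.index ≠ 0 := Subgroup.index_ne_zero_of_finite
  have key : Nat.card (K.comap (QuotientGroup.mk' N)) * K.index
      = (Nat.card K * Nat.card N) * K.index := by
    calc Nat.card (K.comap (QuotientGroup.mk' N)) * K.index
        = Nat.card (K.comap (QuotientGroup.mk' N)) * (K.comap (QuotientGroup.mk' N)).index := by
          rw [h1]
      _ = Nat.card G := h2
      _ = (Nat.card K * K.index) * Nat.card N := by rw [h4, ← h3]
      _ = (Nat.card K * Nat.card N) * K.index := by ring
  exact Nat.eq_of_mul_eq_mul_right (Nat.pos_of_ne_zero hidx) key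

/-- A nontrivial normal subgroup of a finite p-group contains a central element of order p. -/
private theorem myMeetsCenter {G : Type*} [Group G] [Finite G] {p : ℕ}
    (hp : p.Prime) (hpg : IsPGroup p G) {N : Subgroup G} (hN : N.Normal) (hbot : N ≠ ⊥) :
    ∃ z : G, z ∈ N ∧ z ∈ Subgroup.center G ∧ orderOf z = p := by
  have : Fact p.Prime := ⟨hp⟩
  haveI := hN
  have hpc : IsPGroup p (ConjAct G) := hpg.of_equiv ConjAct.toConjAct
  have hmod := hpc.card_modEq_card_fixedPoints (N : Subgroup G)
  have hNnt : Nontrivial N := (Subgroup.nontrivial_iff_ne_bot N).mpr hbot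
  obtain ⟨k, hk0, hkcard⟩ := (hpg.to_subgroup N).nontrivial_iff_card.mp hNnt
  have hdvdN : p ∣ Nat.card N := hkcard ▸ dvd_pow_self p hk0.ne'
  have hdvdF : p ∣ Nat.card (MulAction.fixedPoints (ConjAct G) N) :=
    Nat.modEq_zero_iff_dvd.mp ((hmod.symm.trans (Nat.modEq_zero_iff_dvd.mpr hdvdN)))
  have hone : (1 : N) ∈ MulAction.fixedPoints (ConjAct G) N := fun g => smul_one g
  haveI : Nonempty (MulAction.fixedPoints (ConjAct G) N) := ⟨⟨1, hone⟩⟩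
  have hpos : 0 < Nat.card (MulAction.fixedPoints (ConjAct G) N) := Nat.card_pos
  have hlt : 1 < Nat.card (MulAction.fixedPoints (ConjAct G) N) :=
    lt_of_lt_of_le hp.one_lt (Nat.le_of_dvd hpos hdvdF)
  haveI : Nontrivial (MulAction.fixedPoints (ConjAct G) N) :=
    Finite.one_lt_card_iff_nontrivial.mp hlt
  obtain ⟨x, hx⟩ := exists_ne (⟨(1 : N), hone⟩ : MulAction.fixedPoints (ConjAct G) N)
  -- the element (x : G) is a nontrivial element of N ⊓ center G
  have hxN : ((x : N) : G) ∈ N := (x : N).2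
  have hxc : ((x : N) : G) ∈ Subgroup.center G := by
    rw [Subgroup.mem_center_iff]
    intro g
    have hfix : (ConjAct.toConjAct g) • (x : N) = (x : N) := x.2 (ConjAct.toConjAct g)
    have := congrArg (Subtype.val) hfix
    rw [ConjAct.Subgroup.val_conj_smul, ConjAct.toConjAct_smul] at this
    calc g * ((x : N) : G) = (g * (x : N) * g⁻¹) * g := by group
    _ = ((x : N) : G) * g := by rw [this]
  have hxne : ((x : N) : G) ≠ 1 := by
    intro h
    apply hx
    ext
    simpa using h
  -- now apply Cauchy in N ⊓ center G
  set C : Subgroup G := N ⊓ Subgroup.center G with hC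
  have hCnt : Nontrivial C := by
    rw [Subgroup.nontrivial_iff_exists_ne_one]
    exact ⟨_, ⟨hxN, hxc⟩, hxne⟩
  obtain ⟨k', hk'0, hk'card⟩ := (hpg.to_subgroup C).nontrivial_iff_card.mp hCnt
  have hdvdC : p ∣ Nat.card C := hk'card ▸ dvd_pow_self p hk'0.ne'
  obtain ⟨c, hc⟩ := exists_prime_orderOf_dvd_card' (G := C) p hdvdC
  refine ⟨(c : G), c.2.1, c.2.2, ?_⟩
  rw [Subgroup.orderOf_coe, hc]

/-- In a finite p-group, every normal subgroup contains a normal subgroup of the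
    whole group of any p-power order dividing its own order. -/
private theorem myExistsNormalLe {G : Type*} [Group G] [Finite G] {p : ℕ}
    (hp : p.Prime) (hpg : IsPGroup p G) (m : ℕ) :
    ∀ {N : Subgroup G}, N.Normal → p ^ m ∣ Nat.card N →
      ∃ M : Subgroup G, M.Normal ∧ M ≤ N ∧ Nat.card M = p ^ m := by
  induction m with
  | zero => exact fun {N} _ _ => ⟨⊥, inferInstance, bot_le, by simp⟩
  | succ m ih =>
    intro N hN hdvd
    obtain ⟨M, hMnorm, hMN, hMcard⟩ := ih hN (dvd_trans (pow_dvd_pow p (Nat.le_succ m)) hdvd)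
    haveI := hMnorm
    have hQ : IsPGroup p (G ⧸ M) := hpg.to_quotient M
    set N' : Subgroup (G ⧸ M) := N.map (QuotientGroup.mk' M) with hN'
    have hN'norm : N'.Normal := Subgroup.Normal.map hN _ (QuotientGroup.mk'_surjective M)
    have hN'bot : N' ≠ ⊥ := by
      intro h
      rw [hN', Subgroup.map_eq_bot_iff, QuotientGroup.ker_mk'] at h
      have := Subgroup.card_dvd_of_le h
      rw [hMcard] at this
      have h2 : p ^ (m + 1) ∣ p ^ m := dvd_trans hdvd this
      exact absurd (Nat.pow_dvd_pow_iff_le_right hp.one_lt |>.mp h2) (by omega)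
    obtain ⟨z, hzN', hzc, hzord⟩ := myMeetsCenter hp hQ hN'norm hN'bot
    set K : Subgroup (G ⧸ M) := Subgroup.zpowers z with hK
    have hKc : K ≤ Subgroup.center (G ⧸ M) := Subgroup.zpowers_le.mpr hzc
    have hKnorm : K.Normal := myNormalOfLeCenter hKc
    have hKN' : K ≤ N' := Subgroup.zpowers_le.mpr hzN'
    have hKcard : Nat.card K = p := by rw [hK, Nat.card_zpowers, hzord]
    refine ⟨K.comap (QuotientGroup.mk' M), Subgroup.Normal.comap hKnorm _, ?_, ?_⟩
    · calc K.comap (QuotientGroup.mk' M) ≤ N'.comap (QuotientGroup.mk' M) :=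
          Subgroup.comap_mono hKN'
      _ = N ⊔ (QuotientGroup.mk' M).ker := Subgroup.comap_map_eq _ _
      _ = N := by rw [QuotientGroup.ker_mk']; exact sup_eq_left.mpr hMN
    · rw [myCardComapMk, hKcard, hMcard, pow_succ, mul_comm]

/-- In a finite p-group, every normal subgroup is contained in a normal subgroup of
    any p-power order (dividing the group order) which is a multiple of its order. -/
private theorem myExistsNormalGe {G : Type*} [Group G] [Finite G] {p : ℕ}
    (hp : p.Prime) (hpg : IsPGroup p G) {N : Subgroup G} (hN : N.Normal) (m : ℕ)
    (hm : p ^ m ∣ Nat.card G) (hNm : Nat.card N ∣ p ^ m) :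
    ∃ M : Subgroup G, M.Normal ∧ N ≤ M ∧ Nat.card M = p ^ m := by
  haveI := hN
  obtain ⟨t, ht⟩ := hNm
  have ht' : t ∣ p ^ m := Dvd.intro_left _ ht.symm
  have hNcard0 : Nat.card N ≠ 0 := Nat.card_pos.ne'
  have hQcard : Nat.card G = Nat.card (G ⧸ N) * Nat.card N :=
    Subgroup.card_eq_card_quotient_mul_card_subgroup N
  have htQ : t ∣ Nat.card (G ⧸ N) := by
    have h1 : Nat.card N * t ∣ Nat.card (G ⧸ N) * Nat.card N := by
      rw [← ht, ← hQcard]; exact hm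
    rw [mul_comm (Nat.card (G ⧸ N)) _] at h1
    exact (mul_dvd_mul_iff_left hNcard0).mp h1
  obtain ⟨s, _, hts⟩ := (Nat.dvd_prime_pow hp).mp ht'
  have hQ : IsPGroup p (G ⧸ N) := hpg.to_quotient N
  have hsdvd : p ^ s ∣ Nat.card (⊤ : Subgroup (G ⧸ N)) := by
    rw [Subgroup.card_top, ← hts]; exact htQ
  obtain ⟨M', hM'norm, _, hM'card⟩ := myExistsNormalLe hp hQ s inferInstance hsdvd
  refine ⟨M'.comap (QuotientGroup.mk' N), Subgroup.Normal.comap hM'norm _, ?_, ?_⟩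
  · have h := Subgroup.ker_le_comap (QuotientGroup.mk' N) M'
    rwa [QuotientGroup.ker_mk'] at h
  · rw [myCardComapMk, hM'card, ← hts, ht, mul_comm]

/-- For a finite `p`-group `G`, the following are equivalent: every term `γᵢ(G)` of
the lower central series (for `1 ≤ i ≤ c(G)`) is the unique normal subgroup of its
order, and every normal subgroup is comparable to every such `γᵢ(G)`.
(Here `γᵢ(G) = lowerCentralSeries G (i-1)`, so `i` ranges over indices `< c(G)`.) -/
theorem stmt7 {G : Type*} [Group G] [Finite G] (p : ℕ) (hp : p.Prime)
    (hpg : IsPGroup p G) [Group.IsNilpotent G] :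
    (∀ i < Group.nilpotencyClass G, ∀ N : Subgroup G, N.Normal →
        Nat.card N = Nat.card ((⊤ : Subgroup G).lowerCentralSeries i) → N = (⊤ : Subgroup G).lowerCentralSeries i) ↔
      (∀ N : Subgroup G, N.Normal → ∀ i < Group.nilpotencyClass G,
        N ≤ (⊤ : Subgroup G).lowerCentralSeries i ∨ (⊤ : Subgroup G).lowerCentralSeries i ≤ N) := by
  have : Fact p.Prime := ⟨hp⟩
  constructor
  · intro h1 N hN i hi
    have hγnorm : ((⊤ : Subgroup G).lowerCentralSeries i).Normal := Subgroup.lowerCentralSeries_normal ⊤ i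
    obtain ⟨a, ha⟩ := (hpg.to_subgroup N).exists_card_eq
    obtain ⟨b, hb⟩ := (hpg.to_subgroup ((⊤ : Subgroup G).lowerCentralSeries i)).exists_card_eq
    rcases le_total a b with hab | hba
    · -- N is smaller; embed it in a normal subgroup of the same order as γᵢ
      left
      have hm : p ^ b ∣ Nat.card G := hb ▸ Subgroup.card_subgroup_dvd_card _
      have hNm : Nat.card N ∣ p ^ b := ha ▸ pow_dvd_pow p hab
      obtain ⟨M, hMnorm, hNM, hMcard⟩ := myExistsNormalGe hp hpg hN b hm hNm
      have : M = (⊤ : Subgroup G).lowerCentralSeries i := h1 i hi M hMnorm (by rw [hMcard, hb])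
      exact this ▸ hNM
    · -- γᵢ is smaller; find a normal subgroup of its order inside N
      right
      have hdvd : p ^ b ∣ Nat.card N := ha ▸ pow_dvd_pow p hba
      obtain ⟨M, hMnorm, hMN, hMcard⟩ := myExistsNormalLe hp hpg b hN hdvd
      have : M = (⊤ : Subgroup G).lowerCentralSeries i := h1 i hi M hMnorm (by rw [hMcard, hb])
      exact this ▸ hMN
  · intro h2 i hi N hN hcard
    rcases h2 N hN i hi with h | h
    · exact Subgroup.eq_of_le_of_card_ge h hcard.ge
    · exact (Subgroup.eq_of_le_of_card_ge h hcard.le).symm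
end

section
/- Let p be a prime and G a finite p-group of maximal class (nilpotency class equal to log_p|G| − 1, with |G| ≥ p⁴). Then every antichain in the lattice of normal subgroups of G has at most p+1 elements, i.e. G is thin. -/
/-- A finite `p`-group is thin if every antichain in its lattice of normal
subgroups has at most `p + 1` elements. -/
def IsThin (p : ℕ) (G : Type*) [Group G] : Prop :=
  ∀ S : Set (Subgroup G), (∀ N ∈ S, N.Normal) →
    (∀ N ∈ S, ∀ M ∈ S, N ≤ M → N = M) → S.ncard ≤ p + 1

universe u

section AuxLemmas

variable {p : ℕ}

private lemma class_le_one_of_comm {G : Type*} [Group G] [Group.IsNilpotent G]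
    (h : ∀ a b : G, a * b = b * a) : Group.nilpotencyClass G ≤ 1 := by
  apply upperCentralSeries_eq_top_iff_nilpotencyClass_le.mp
  rw [upperCentralSeries_one, eq_top_iff]
  intro g _
  rw [Subgroup.mem_center_iff]
  intro h'
  exact h h' g

private lemma not_isCyclic_quotient_center {G : Type*} [Group G] [Group.IsNilpotent G]
    (h : 2 ≤ Group.nilpotencyClass G) :
    ¬ IsCyclic (G ⧸ Subgroup.center G) := by
  intro hc
  have hcomm := commutative_of_cyclic_center_quotient (QuotientGroup.mk' (Subgroup.center G))
    (le_of_eq (QuotientGroup.ker_mk' _))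
  have := class_le_one_of_comm hcomm
  omega

private lemma card_quotient_center_dvd (hp : p.Prime) :
    ∀ c : ℕ, 2 ≤ c → ∀ (G : Type u) [Group G] [Finite G] [Group.IsNilpotent G],
      IsPGroup p G → Group.nilpotencyClass G = c →
      p ^ c ∣ Nat.card (G ⧸ Subgroup.center G) := by
  intro c
  induction c using Nat.strong_induction_on with
  | _ c IH =>
    intro hc G _ _ _ hpg hclass
    haveI : Fact p.Prime := ⟨hp⟩
    have hpgQ : IsPGroup p (G ⧸ Subgroup.center G) := hpg.to_quotient _
    have hclassQ : Group.nilpotencyClass (G ⧸ Subgroup.center G) = c - 1 := by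
      rw [nilpotencyClass_quotient_center, hclass]
    have hQnontriv : Nontrivial (G ⧸ Subgroup.center G) := by
      rcases subsingleton_or_nontrivial (G ⧸ Subgroup.center G) with hs | hs
      · have : Group.nilpotencyClass (G ⧸ Subgroup.center G) = 0 :=
          nilpotencyClass_zero_iff_subsingleton.mpr hs
        omega
      · exact hs
    have hQnoncyc : ¬ IsCyclic (G ⧸ Subgroup.center G) :=
      not_isCyclic_quotient_center (by omega)
    obtain ⟨k, hk⟩ := IsPGroup.iff_card.mp hpgQ
    have hk2 : 2 ≤ k := by
      by_contra hlt
      interval_cases k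
      · have h1 := Finite.one_lt_card_iff_nontrivial.mpr hQnontriv
        rw [hk, pow_zero] at h1
        omega
      · exact hQnoncyc (isCyclic_of_prime_card (by simpa using hk))
    rcases eq_or_lt_of_le hc with hc2 | hc3
    · rw [hk]
      exact pow_dvd_pow p (by omega)
    · have IH' := IH (c - 1) (by omega) (by omega) (G ⧸ Subgroup.center G) hpgQ hclassQ
      have hprod := Subgroup.card_eq_card_quotient_mul_card_subgroup
        (Subgroup.center (G ⧸ Subgroup.center G))
      have hZ : p ∣ Nat.card (Subgroup.center (G ⧸ Subgroup.center G)) := by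
        haveI : Nontrivial (Subgroup.center (G ⧸ Subgroup.center G)) := hpgQ.center_nontrivial
        obtain ⟨m, hm0, hm⟩ := (IsPGroup.nontrivial_iff_card (hpgQ.to_subgroup _)).mp this
        rw [hm]
        exact dvd_pow_self p (by omega)
      calc p ^ c = p ^ (c - 1) * p := by rw [← pow_succ]; congr 1; omega
        _ ∣ Nat.card ((G ⧸ Subgroup.center G) ⧸ Subgroup.center (G ⧸ Subgroup.center G)) *
              Nat.card (Subgroup.center (G ⧸ Subgroup.center G)) := mul_dvd_mul IH' hZ
        _ = Nat.card (G ⧸ Subgroup.center G) := hprod.symm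

private lemma exists_central_of_normal (hp : p.Prime) {G : Type*} [Group G] [Finite G]
    (hpg : IsPGroup p G) {N : Subgroup G} (hN : N.Normal) (hbot : N ≠ ⊥) :
    ∃ g : G, g ∈ N ∧ g ∈ Subgroup.center G ∧ g ≠ 1 := by
  haveI : Fact p.Prime := ⟨hp⟩
  haveI := hN
  have hact : IsPGroup p (ConjAct G) := hpg.of_equiv ConjAct.toConjAct
  have hdvd : p ∣ Nat.card N := by
    obtain ⟨m, hm⟩ := IsPGroup.iff_card.mp (hpg.to_subgroup N)
    have hnt : 1 < Nat.card N := by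
      rw [← Subgroup.one_lt_card_iff_ne_bot] at hbot
      exact hbot
    rcases Nat.eq_zero_or_pos m with rfl | hm0
    · rw [pow_zero] at hm; omega
    · rw [hm]; exact dvd_pow_self p (by omega)
  have h1 : (1 : N) ∈ MulAction.fixedPoints (ConjAct G) N := fun g => smul_one g
  obtain ⟨b, hbfix, hb1⟩ :=
    hact.exists_fixed_point_of_prime_dvd_card_of_fixed_point (α := N) hdvd h1
  refine ⟨(b : G), b.2, ?_, ?_⟩
  · rw [Subgroup.mem_center_iff]
    intro g
    have hval := congrArg Subtype.val (hbfix (ConjAct.toConjAct g))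
    rw [ConjAct.Subgroup.val_conj_smul, ConjAct.toConjAct_smul] at hval
    have h2 : (b : G) * g = g * (b : G) := by
      conv_lhs => rw [← hval]
      group
    exact h2.symm
  · intro h
    exact hb1 (Subtype.ext h.symm)

private lemma base_case (hp : p.Prime) (G : Type u) [Group G] [Finite G]
    (hcard : Nat.card G = p ^ 2) (S : Set (Subgroup G))
    (hanti : ∀ N ∈ S, ∀ M ∈ S, N ≤ M → N = M) : S.ncard ≤ p + 1 := by
  classical
  haveI : Fact p.Prime := ⟨hp⟩
  haveI : Finite (Subgroup G) :=
    Finite.of_injective (fun H : Subgroup G => (H : Set G)) SetLike.coe_injective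
  by_cases hS : S.ncard ≤ 1
  · omega
  push_neg at hS
  have hSfin : S.Finite := Set.toFinite S
  have hptop : ∀ N ∈ S, Nat.card N = p := by
    intro N hN
    obtain ⟨M, hM, hMN⟩ := Set.exists_ne_of_one_lt_ncard hS N
    have hNbot : N ≠ ⊥ := by
      rintro rfl
      exact hMN (hanti ⊥ hN M hM bot_le).symm
    have hNtop : N ≠ ⊤ := by
      rintro rfl
      exact hMN (hanti M hM ⊤ hN le_top)
    obtain ⟨j, hj2, hjcard⟩ := (Nat.dvd_prime_pow hp).mp (hcard ▸ Subgroup.card_subgroup_dvd_card N)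
    interval_cases j
    · exact absurd (Subgroup.card_eq_one.mp (by simpa using hjcard)) hNbot
    · simpa using hjcard
    · exact absurd (Subgroup.eq_top_of_card_eq N (by rw [hjcard, hcard])) hNtop
  have hdisj : ∀ N ∈ S, ∀ M ∈ S, N ≠ M → N ⊓ M = ⊥ := by
    intro N hN M hM hne
    have hle : N ⊓ M ≤ N := inf_le_left
    have hdvd : Nat.card (N ⊓ M : Subgroup G) ∣ p := hptop N hN ▸ Subgroup.card_dvd_of_le hle
    rcases hp.eq_one_or_self_of_dvd _ hdvd with h1 | hpeq
    · exact Subgroup.card_eq_one.mp h1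
    · exfalso
      have heq : N ⊓ M = N := Subgroup.eq_of_le_of_card_ge hle (by rw [hptop N hN, hpeq])
      exact hne (hanti N hN M hM (heq ▸ inf_le_right))
  haveI : Fintype G := Fintype.ofFinite G
  set t : Subgroup G → Finset G := fun N => (N : Set G).toFinset.erase 1 with ht
  have htcard : ∀ N ∈ S, (t N).card = p - 1 := by
    intro N hN
    have h1 : (1 : G) ∈ (N : Set G).toFinset := by
      rw [Set.mem_toFinset]; exact N.one_mem
    rw [ht]
    rw [Finset.card_erase_of_mem h1, Set.toFinset_card]
    have hcN : Fintype.card ((N : Set G) : Type u) = Nat.card N := by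
      rw [← Nat.card_eq_fintype_card]
      rfl
    rw [hcN, hptop N hN]
  set F := hSfin.toFinset with hF
  have hFcard : F.card = S.ncard := (Set.ncard_eq_toFinset_card S hSfin).symm
  have hdisjF : ∀ N ∈ F, ∀ M ∈ F, N ≠ M → Disjoint (t N) (t M) := by
    intro N hN M hM hne
    rw [Finset.disjoint_left]
    intro g hgN hgM
    have hg1 : g ≠ 1 := Finset.ne_of_mem_erase hgN
    have hgN' : g ∈ N := by
      have := Finset.mem_of_mem_erase hgN
      rwa [Set.mem_toFinset] at this
    have hgM' : g ∈ M := by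
      have := Finset.mem_of_mem_erase hgM
      rwa [Set.mem_toFinset] at this
    have hmem : g ∈ N ⊓ M := ⟨hgN', hgM'⟩
    rw [hdisj N (hSfin.mem_toFinset.mp hN) M (hSfin.mem_toFinset.mp hM) hne] at hmem
    exact hg1 hmem
  have hcardBU : (F.biUnion t).card = F.card * (p - 1) := by
    rw [Finset.card_biUnion hdisjF,
      Finset.sum_congr rfl (fun N hN => htcard N (hSfin.mem_toFinset.mp hN)),
      Finset.sum_const, smul_eq_mul]
  have hsub : F.biUnion t ⊆ Finset.univ.erase 1 := by
    intro g hg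
    rw [Finset.mem_biUnion] at hg
    obtain ⟨N, _, hgN⟩ := hg
    exact Finset.mem_erase.mpr ⟨Finset.ne_of_mem_erase hgN, Finset.mem_univ g⟩
  have hbound : F.card * (p - 1) ≤ p ^ 2 - 1 := by
    rw [← hcardBU]
    calc (F.biUnion t).card ≤ (Finset.univ.erase (1 : G)).card := Finset.card_le_card hsub
      _ = Fintype.card G - 1 := by
          rw [Finset.card_erase_of_mem (Finset.mem_univ 1), Finset.card_univ]
      _ = p ^ 2 - 1 := by rw [← Nat.card_eq_fintype_card, hcard]
  have hfact : p ^ 2 - 1 = (p + 1) * (p - 1) := by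
    have h2 : 2 ≤ p := hp.two_le
    obtain ⟨q, rfl⟩ : ∃ q, p = q + 1 := ⟨p - 1, by omega⟩
    have hs : (q + 1) ^ 2 = q * q + 2 * q + 1 := by ring
    have h1 : q * q + 2 * q + 1 - 1 = q * q + 2 * q := by omega
    have h2' : q + 1 - 1 = q := by omega
    rw [hs, h1, h2']
    ring
  rw [← hFcard]
  have hpos : 0 < p - 1 := by have := hp.two_le; omega
  exact Nat.le_of_mul_le_mul_right (by rw [← hfact]; exact hbound) hpos

private lemma main_aux (hp : p.Prime) : ∀ n : ℕ, 2 ≤ n → ∀ (G : Type u) [Group G] [Finite G]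
    [Group.IsNilpotent G], IsPGroup p G → Nat.card G = p ^ n →
    Group.nilpotencyClass G = n - 1 →
    ∀ S : Set (Subgroup G), (∀ N ∈ S, N.Normal) →
      (∀ N ∈ S, ∀ M ∈ S, N ≤ M → N = M) → S.ncard ≤ p + 1 := by
  intro n hn
  induction n, hn using Nat.le_induction with
  | base =>
    intro G _ _ _ _ hcard _ S _ hanti
    exact base_case hp G hcard S hanti
  | succ n hn IH =>
    intro G _ _ _ hpg hcard hclass S hnorm hanti
    haveI : Fact p.Prime := ⟨hp⟩
    by_cases hbot : (⊥ : Subgroup G) ∈ S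
    · have hsub : S ⊆ {⊥} := by
        intro M hM
        rw [Set.mem_singleton_iff]
        exact (hanti ⊥ hbot M hM bot_le).symm
      calc S.ncard ≤ ({⊥} : Set (Subgroup G)).ncard :=
            Set.ncard_le_ncard hsub (Set.finite_singleton _)
        _ = 1 := Set.ncard_singleton _
        _ ≤ p + 1 := by omega
    · have hclassG : Group.nilpotencyClass G = n := by simpa using hclass
      have hnontriv : Nontrivial G := by
        have h1 : 1 < Nat.card G := by
          rw [hcard]; exact Nat.one_lt_pow (by omega) hp.one_lt
        exact Finite.one_lt_card_iff_nontrivial.mp h1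
      have hdvd : p ^ n ∣ Nat.card (G ⧸ Subgroup.center G) :=
        card_quotient_center_dvd hp n hn G hpg hclassG
      obtain ⟨q, hq⟩ := IsPGroup.iff_card.mp (hpg.to_quotient (Subgroup.center G))
      obtain ⟨z, hz⟩ := IsPGroup.iff_card.mp (hpg.to_subgroup (Subgroup.center G))
      have hz1 : 1 ≤ z := by
        haveI : Nontrivial (Subgroup.center G) := hpg.center_nontrivial
        have h1 := Finite.one_lt_card (α := Subgroup.center G)
        rcases Nat.eq_zero_or_pos z with rfl | h
        · rw [hz, pow_zero] at h1; omega
        · omega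
      have hprod := Subgroup.card_eq_card_quotient_mul_card_subgroup (Subgroup.center G)
      rw [hcard, hq, hz, ← pow_add] at hprod
      have hqz : n + 1 = q + z := Nat.pow_right_injective hp.two_le hprod
      have hle' : p ^ n ≤ p ^ q := Nat.le_of_dvd (pow_pos hp.pos q) (hq ▸ hdvd)
      have hnq : n ≤ q := (Nat.pow_le_pow_iff_right hp.one_lt).mp hle'
      have hcardZ : Nat.card (Subgroup.center G) = p := by
        rw [hz]
        have : z = 1 := by omega
        rw [this, pow_one]
      have hcardQ : Nat.card (G ⧸ Subgroup.center G) = p ^ n := by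
        rw [hq]; congr 1; omega
      have hZle : ∀ N ∈ S, Subgroup.center G ≤ N := by
        intro N hNS
        have hNbot : N ≠ ⊥ := fun h => hbot (h ▸ hNS)
        obtain ⟨g, hgN, hgZ, hg1⟩ := exists_central_of_normal hp hpg (hnorm N hNS) hNbot
        have hle : N ⊓ Subgroup.center G ≤ Subgroup.center G := inf_le_right
        have heq : N ⊓ Subgroup.center G = Subgroup.center G := by
          apply Subgroup.eq_of_le_of_card_ge hle
          have hdvd' : Nat.card (N ⊓ Subgroup.center G : Subgroup G) ∣ p :=
            hcardZ ▸ Subgroup.card_dvd_of_le hle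
          have hne1 : Nat.card (N ⊓ Subgroup.center G : Subgroup G) ≠ 1 := by
            intro h
            have hmem : g ∈ N ⊓ Subgroup.center G := ⟨hgN, hgZ⟩
            rw [Subgroup.card_eq_one.mp h, Subgroup.mem_bot] at hmem
            exact hg1 hmem
          have := (hp.eq_one_or_self_of_dvd _ hdvd').resolve_left hne1
          omega
        exact heq ▸ inf_le_left
      set f := QuotientGroup.mk' (Subgroup.center G) with hfdef
      have hcomap : ∀ N ∈ S, Subgroup.comap f (Subgroup.map f N) = N := by
        intro N hNS
        rw [Subgroup.comap_map_eq, QuotientGroup.ker_mk', sup_eq_left.mpr (hZle N hNS)]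
      have hinj : Set.InjOn (Subgroup.map f) S := by
        intro N hN M hM h
        rw [← hcomap N hN, ← hcomap M hM, h]
      have hclassQ : Group.nilpotencyClass (G ⧸ Subgroup.center G) = n - 1 := by
        rw [nilpotencyClass_quotient_center, hclassG]
      have hS' := IH (G ⧸ Subgroup.center G) (hpg.to_quotient _) hcardQ hclassQ
        ((Subgroup.map f) '' S) ?_ ?_
      · rwa [Set.ncard_image_of_injOn hinj] at hS'
      · rintro _ ⟨N, hN, rfl⟩
        exact (hnorm N hN).map f (QuotientGroup.mk'_surjective _)
      · rintro _ ⟨N, hN, rfl⟩ _ ⟨M, hM, rfl⟩ hle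
        have hNM : N ≤ M := by
          rw [← hcomap N hN, ← hcomap M hM]
          exact Subgroup.comap_mono hle
        rw [hanti N hN M hM hNM]

end AuxLemmas

/-- A finite `p`-group of maximal class (with `|G| = pⁿ`, `n ≥ 4`, and class `n-1`)
is thin. -/
theorem stmt14 {G : Type*} [Group G] [Finite G] (p : ℕ) (hp : p.Prime)
    (hpg : IsPGroup p G) [Group.IsNilpotent G]
    (n : ℕ) (hcard : Nat.card G = p ^ n) (hn : 4 ≤ n)
    (hclass : Group.nilpotencyClass G = n - 1) :
    IsThin p G := by
  intro S hnorm hanti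
  exact main_aux hp n (by omega) G hpg hcard hclass S hnorm hanti
end
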